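/- Let F(x) = −∫_{B(x,r)} φ(q) dq for an integrable φ : ℝ² → ℝ and fixed r > 0. If φ is continuous, then F is differentiable and ∇F(x) = −∫₀^{2π} (cos θ, sin θ)·φ(x + r(cos θ, sin θ))·r dθ. -/

import Mathlib

open Real Metric MeasureTheory Set

noncomputable def wfn (r t : ℝ) : ℝ := Real.sqrt (r^2 - t^2)

def disk (p : ℝ × ℝ) (r : ℝ) : Set (ℝ × ℝ) := {q | (q.1 - p.1)^2 + (q.2 - p.2)^2 < r^2}

lemma isOpen_disk (p : ℝ × ℝ) (r : ℝ) : IsOpen (disk p r) := by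
  have : Continuous fun q : ℝ × ℝ => (q.1 - p.1)^2 + (q.2 - p.2)^2 := by fun_prop
  exact isOpen_lt this continuous_const

lemma wfn_nonneg (r t : ℝ) : 0 ≤ wfn r t := Real.sqrt_nonneg _

lemma wfn_le (r t : ℝ) (hr : 0 ≤ r) : wfn r t ≤ r := by
  have : wfn r t ≤ Real.sqrt (r^2) := Real.sqrt_le_sqrt (by nlinarith [sq_nonneg t])
  simpa [Real.sqrt_sq hr] using this

lemma continuous_wfn (r : ℝ) : Continuous (wfn r) := by
  unfold wfn; fun_prop

lemma slice_eq (a w : ℝ) (hw : 0 < w) :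
    {s : ℝ | (s - a)^2 < w^2} = Ioo (a - w) (a + w) := by
  ext s
  simp only [mem_setOf_eq, mem_Ioo]
  constructor
  · intro h
    constructor
    · nlinarith [sq_nonneg (s - a + w)]
    · nlinarith [sq_nonneg (s - a - w)]
  · intro ⟨h1, h2⟩; nlinarith

lemma abs_le_of_uIcc {s h : ℝ} (hs : s ∈ uIcc (0:ℝ) h) : |s| ≤ |h| := by
  rw [Set.uIcc_eq_union] at hs
  rcases hs with hs | hs
  · rw [Set.mem_Icc] at hs
    exact abs_le.2 ⟨le_trans (neg_nonpos.2 (abs_nonneg h)) hs.1, le_trans hs.2 (le_abs_self h)⟩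
  · rw [Set.mem_Icc] at hs
    exact abs_le.2 ⟨le_trans (neg_abs_le h) hs.1, le_trans hs.2 (abs_nonneg h)⟩

/-- continuous partials at a point imply Fréchet differentiability -/
lemma hasFDerivAt_of_partials (f fa fb : ℝ × ℝ → ℝ) (p : ℝ × ℝ)
    (ha : ∀ q : ℝ × ℝ, HasDerivAt (fun s => f (s, q.2)) (fa q) q.1)
    (hb : ∀ q : ℝ × ℝ, HasDerivAt (fun s => f (q.1, s)) (fb q) q.2)
    (hca : ContinuousAt fa p) (hcb : ContinuousAt fb p) :
    HasFDerivAt f ((fa p) • (ContinuousLinearMap.fst ℝ ℝ ℝ)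
      + (fb p) • (ContinuousLinearMap.snd ℝ ℝ ℝ)) p := by
  rw [hasFDerivAt_iff_isLittleO_nhds_zero, Asymptotics.isLittleO_iff]
  intro ε hε
  have hε2 : 0 < ε / 2 := by linarith
  obtain ⟨δ, hδ, hδa⟩ := Metric.continuousAt_iff.1 hca (ε/2) hε2
  obtain ⟨δ', hδ', hδb⟩ := Metric.continuousAt_iff.1 hcb (ε/2) hε2
  rw [Metric.eventually_nhds_iff]
  refine ⟨min δ δ', lt_min hδ hδ', fun v hv => ?_⟩
  rw [dist_zero_right] at hv
  have hv1 : ‖v.1‖ ≤ ‖v‖ := norm_fst_le v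
  have hv2 : ‖v.2‖ ≤ ‖v‖ := norm_snd_le v
  -- T1 : horizontal increment
  have T1 : ‖f (p.1 + v.1, p.2 + v.2) - f (p.1, p.2 + v.2) - v.1 * fa p‖ ≤ ε/2 * ‖v.1‖ := by
    have key : ∀ s ∈ uIcc (0:ℝ) v.1,
        HasDerivWithinAt (fun s => f (p.1 + s, p.2 + v.2) - s * fa p)
          (fa (p.1 + s, p.2 + v.2) - fa p) (uIcc (0:ℝ) v.1) s := by
      intro s _
      have h1 : HasDerivAt (fun s => f (p.1 + s, p.2 + v.2)) (fa (p.1 + s, p.2 + v.2)) s := by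
        have := (ha (p.1 + s, p.2 + v.2)).comp s ((hasDerivAt_id s).const_add p.1)
        rw [mul_one] at this; exact this
      exact (h1.sub (hasDerivAt_mul_const (fa p))).hasDerivWithinAt
    have bound : ∀ s ∈ uIcc (0:ℝ) v.1, ‖fa (p.1 + s, p.2 + v.2) - fa p‖ ≤ ε/2 := by
      intro s hs
      have hd : dist (p.1 + s, p.2 + v.2) p < δ := by
        rw [Prod.dist_eq]
        have h1 : dist (p.1 + s) p.1 = |s| := by
          rw [Real.dist_eq]; ring_nf
        have h2 : dist (p.2 + v.2) p.2 = |v.2| := by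
          rw [Real.dist_eq]; ring_nf
        rw [h1, h2]
        have := abs_le_of_uIcc hs
        have e1 : |v.1| = ‖v.1‖ := rfl
        have e2 : |v.2| = ‖v.2‖ := rfl
        refine lt_of_le_of_lt (max_le ?_ ?_) (lt_of_lt_of_le hv (min_le_left _ _))
        · rw [e1] at this; exact le_trans this hv1
        · rw [e2]; exact hv2
      have := hδa hd
      rw [Real.dist_eq] at this
      exact le_of_lt this
    have conv := (convex_uIcc (0:ℝ) v.1).norm_image_sub_le_of_norm_hasDerivWithin_le
      key bound Set.left_mem_uIcc Set.right_mem_uIcc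
    -- conv : ‖g v.1 - g 0‖ ≤ ε/2 * ‖v.1 - 0‖
    have : f (p.1 + v.1, p.2 + v.2) - v.1 * fa p - f (p.1, p.2 + v.2)
        = f (p.1 + v.1, p.2 + v.2) - f (p.1, p.2 + v.2) - v.1 * fa p := by ring
    rw [← this]
    simpa using conv
  -- T2 : vertical increment
  have T2 : ‖f (p.1, p.2 + v.2) - f (p.1, p.2) - v.2 * fb p‖ ≤ ε/2 * ‖v.2‖ := by
    have key : ∀ s ∈ uIcc (0:ℝ) v.2,
        HasDerivWithinAt (fun s => f (p.1, p.2 + s) - s * fb p)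
          (fb (p.1, p.2 + s) - fb p) (uIcc (0:ℝ) v.2) s := by
      intro s _
      have h1 : HasDerivAt (fun s => f (p.1, p.2 + s)) (fb (p.1, p.2 + s)) s := by
        have := (hb (p.1, p.2 + s)).comp s ((hasDerivAt_id s).const_add p.2)
        rw [mul_one] at this; exact this
      exact (h1.sub (hasDerivAt_mul_const (fb p))).hasDerivWithinAt
    have bound : ∀ s ∈ uIcc (0:ℝ) v.2, ‖fb (p.1, p.2 + s) - fb p‖ ≤ ε/2 := by
      intro s hs
      have hd : dist (p.1, p.2 + s) p < δ' := by
        rw [Prod.dist_eq]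
        have h2 : dist (p.2 + s) p.2 = |s| := by rw [Real.dist_eq]; ring_nf
        rw [dist_self, h2]
        have := abs_le_of_uIcc hs
        have e2 : |v.2| = ‖v.2‖ := rfl
        rw [max_eq_right (abs_nonneg s)]
        rw [e2] at this
        exact lt_of_le_of_lt (le_trans this hv2) (lt_of_lt_of_le hv (min_le_right _ _))
      have := hδb hd
      rw [Real.dist_eq] at this
      exact le_of_lt this
    have conv := (convex_uIcc (0:ℝ) v.2).norm_image_sub_le_of_norm_hasDerivWithin_le
      key bound Set.left_mem_uIcc Set.right_mem_uIcc
    have : f (p.1, p.2 + v.2) - v.2 * fb p - f (p.1, p.2)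
        = f (p.1, p.2 + v.2) - f (p.1, p.2) - v.2 * fb p := by ring
    rw [← this]
    simpa using conv
  -- combine
  have expand : f (p + v) - f p - (((fa p) • (ContinuousLinearMap.fst ℝ ℝ ℝ)
      + (fb p) • (ContinuousLinearMap.snd ℝ ℝ ℝ)) v)
      = (f (p.1 + v.1, p.2 + v.2) - f (p.1, p.2 + v.2) - v.1 * fa p)
        + (f (p.1, p.2 + v.2) - f (p.1, p.2) - v.2 * fb p) := by
    have h1 : p + v = (p.1 + v.1, p.2 + v.2) := rfl
    simp only [h1, Prod.mk.eta, ContinuousLinearMap.add_apply, ContinuousLinearMap.coe_smul',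
      Pi.smul_apply, ContinuousLinearMap.coe_fst', ContinuousLinearMap.coe_snd', smul_eq_mul]
    ring_nf
  rw [expand]
  calc ‖_ + _‖ ≤ ε/2 * ‖v.1‖ + ε/2 * ‖v.2‖ := le_trans (norm_add_le _ _) (by gcongr)
    _ ≤ ε/2 * ‖v‖ + ε/2 * ‖v‖ := by gcongr
    _ = ε * ‖v‖ := by ring

lemma inner_slice (ψ : ℝ × ℝ → ℝ) (r : ℝ) (a b y : ℝ) :
    ∫ s : ℝ, (disk (a, b) r).indicator ψ (s, y)
      = ∫ s in (a - wfn r (y - b))..(a + wfn r (y - b)), ψ (s, y) := by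
  have hrw : ∀ s : ℝ, (disk (a, b) r).indicator ψ (s, y)
      = ({s : ℝ | (s - a)^2 < r^2 - (y - b)^2}).indicator (fun s => ψ (s, y)) s := by
    intro s
    simp only [indicator, disk, mem_setOf_eq]
    have : (s - a)^2 + (y - b)^2 < r^2 ↔ (s - a)^2 < r^2 - (y - b)^2 := by
      constructor <;> intro <;> linarith
    by_cases h : (s - a)^2 + (y - b)^2 < r^2
    · rw [if_pos h, if_pos (this.1 h)]
    · rw [if_neg h, if_neg (fun hh => h (this.2 hh))]
  simp_rw [hrw]
  rcases le_or_gt (r^2 - (y - b)^2) 0 with hle | hlt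
  · have hw : wfn r (y - b) = 0 := Real.sqrt_eq_zero'.2 hle
    have hempty : {s : ℝ | (s - a)^2 < r^2 - (y - b)^2} = ∅ := by
      ext s; simp only [mem_setOf_eq, mem_empty_iff_false, iff_false, not_lt]
      nlinarith [sq_nonneg (s - a)]
    rw [hempty, hw]
    simp
  · have hwpos : 0 < wfn r (y - b) := Real.sqrt_pos.2 hlt
    have hwsq : (wfn r (y - b))^2 = r^2 - (y - b)^2 := Real.sq_sqrt hlt.le
    rw [← hwsq, slice_eq a _ hwpos, integral_indicator measurableSet_Ioo,
      intervalIntegral.integral_of_le (by linarith), integral_Ioc_eq_integral_Ioo]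

lemma fubini_disk (ψ : ℝ × ℝ → ℝ) (hi : Integrable ψ) (r : ℝ) (hr : 0 < r) (a b : ℝ) :
    ∫ q in disk (a, b) r, ψ q
      = ∫ t in (-r)..r, ∫ s in (a - wfn r t)..(a + wfn r t), ψ (s, b + t) := by
  have hD := (isOpen_disk (a, b) r).measurableSet
  rw [← integral_indicator hD]
  have hind : Integrable ((disk (a, b) r).indicator ψ) := hi.indicator hD
  rw [Measure.volume_eq_prod] at hind ⊢
  rw [integral_prod_symm _ hind]
  set h : ℝ → ℝ := fun y => ∫ s in (a - wfn r (y - b))..(a + wfn r (y - b)), ψ (s, y) with hh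
  have step1 : ∫ y : ℝ, ∫ s : ℝ, (disk (a, b) r).indicator ψ (s, y) = ∫ y : ℝ, h y := by
    congr 1; funext y; exact inner_slice ψ r a b y
  rw [step1]
  have hzero : ∀ y : ℝ, y ∉ Ioc (b - r) (b + r) → h y = 0 := by
    intro y hy
    have : r^2 - (y - b)^2 ≤ 0 := by
      simp only [mem_Ioc, not_and_or, not_lt, not_le] at hy
      rcases hy with hy | hy
      · nlinarith
      · nlinarith
    have hw : wfn r (y - b) = 0 := Real.sqrt_eq_zero'.2 this
    rw [hh]
    simp only [hw, sub_zero, add_zero, intervalIntegral.integral_same]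
  have hsupp : h = (Ioc (b - r) (b + r)).indicator h := by
    funext y
    by_cases hy : y ∈ Ioc (b - r) (b + r)
    · rw [indicator_of_mem hy]
    · rw [indicator_of_notMem hy, hzero y hy]
  rw [hsupp, integral_indicator measurableSet_Ioc,
    ← intervalIntegral.integral_of_le (by linarith : b - r ≤ b + r)]
  rw [show b - r = b + -r by ring, ← intervalIntegral.integral_comp_add_left h b]
  congr 1; funext t
  simp only [hh, add_sub_cancel_left]

lemma continuous_slice (ψ : ℝ × ℝ → ℝ) (hc : Continuous ψ) (r b : ℝ) :
    Continuous fun z : ℝ × ℝ =>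
      ∫ s in (z.1 - wfn r z.2)..(z.1 + wfn r z.2), ψ (s, b + z.2) := by
  have key : ∀ z : ℝ × ℝ, ∫ s in (z.1 - wfn r z.2)..(z.1 + wfn r z.2), ψ (s, b + z.2)
      = (∫ s in (0:ℝ)..(z.1 + wfn r z.2), ψ (s, b + z.2))
        - (∫ s in (0:ℝ)..(z.1 - wfn r z.2), ψ (s, b + z.2)) := by
    intro z
    exact (intervalIntegral.integral_interval_sub_left
      ((hc.comp (by fun_prop)).intervalIntegrable _ _)
      ((hc.comp (by fun_prop)).intervalIntegrable _ _)).symm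
  simp_rw [key]
  apply Continuous.sub
  · exact intervalIntegral.continuous_parametric_intervalIntegral_of_continuous
      (by fun_prop : Continuous (Function.uncurry fun (z : ℝ × ℝ) (s : ℝ) => ψ (s, b + z.2)))
      (continuous_fst.add ((continuous_wfn r).comp continuous_snd))
  · exact intervalIntegral.continuous_parametric_intervalIntegral_of_continuous
      (by fun_prop : Continuous (Function.uncurry fun (z : ℝ × ℝ) (s : ℝ) => ψ (s, b + z.2)))
      (continuous_fst.sub ((continuous_wfn r).comp continuous_snd))

lemma hasDerivAt_inner (ψ : ℝ × ℝ → ℝ) (hc : Continuous ψ) (w y a : ℝ) :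
    HasDerivAt (fun a => ∫ s in (a - w)..(a + w), ψ (s, y))
      (ψ (a + w, y) - ψ (a - w, y)) a := by
  have hc' : Continuous fun s => ψ (s, y) := by fun_prop
  have H : ∀ v : ℝ, HasDerivAt (fun u => ∫ s in (0:ℝ)..u, ψ (s, y)) (ψ (v, y)) v := by
    intro v
    exact intervalIntegral.integral_hasDerivAt_right (hc'.intervalIntegrable 0 v)
      (hc'.stronglyMeasurable.stronglyMeasurableAtFilter) hc'.continuousAt
  have h1 : HasDerivAt (fun a => ∫ s in (0:ℝ)..(a + w), ψ (s, y)) (ψ (a + w, y)) a := by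
    have := (H (a + w)).comp a ((hasDerivAt_id a).add_const w)
    rw [mul_one] at this; exact this
  have h2 : HasDerivAt (fun a => ∫ s in (0:ℝ)..(a - w), ψ (s, y)) (ψ (a - w, y)) a := by
    have := (H (a - w)).comp a ((hasDerivAt_id a).sub_const w)
    rw [mul_one] at this; exact this
  apply (h1.sub h2).congr_of_eventuallyEq
  apply Filter.Eventually.of_forall
  intro a'
  exact (intervalIntegral.integral_interval_sub_left
    (hc'.intervalIntegrable _ _) (hc'.intervalIntegrable _ _)).symm

lemma hasDerivAt_G_fst (ψ : ℝ × ℝ → ℝ) (hc : Continuous ψ) (hi : Integrable ψ)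
    (r : ℝ) (hr : 0 < r) (a b : ℝ) :
    HasDerivAt (fun a' => ∫ q in disk (a', b) r, ψ q)
      (∫ t in (-r)..r, (ψ (a + wfn r t, b + t) - ψ (a - wfn r t, b + t))) a := by
  have hrw : (fun a' => ∫ q in disk (a', b) r, ψ q)
      = fun a' => ∫ t in (-r)..r, ∫ s in (a' - wfn r t)..(a' + wfn r t), ψ (s, b + t) :=
    funext fun a' => fubini_disk ψ hi r hr a' b
  rw [hrw]
  set K : Set (ℝ × ℝ) := (Icc (a - (1+r)) (a + (1+r))) ×ˢ (Icc (b - r) (b + r)) with hK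
  obtain ⟨M, hM⟩ : ∃ M, ∀ q ∈ K, ‖ψ q‖ ≤ M :=
    (isCompact_Icc.prod isCompact_Icc).exists_bound_of_continuousOn hc.continuousOn
  have hmem : ∀ x ∈ ball a 1, ∀ t ∈ Set.uIoc (-r) r,
      ((x + wfn r t, b + t) ∈ K ∧ (x - wfn r t, b + t) ∈ K) := by
    intro x hx t ht
    rw [Set.uIoc_of_le (by linarith : -r ≤ r)] at ht
    rw [mem_ball, Real.dist_eq, abs_lt] at hx
    have h1 := wfn_nonneg r t
    have h2 := wfn_le r t hr.le
    simp only [hK, Set.mem_prod, Set.mem_Icc]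
    obtain ⟨ht1, ht2⟩ := ht
    refine ⟨⟨⟨by linarith, by linarith⟩, ⟨by linarith, by linarith⟩⟩,
      ⟨⟨by linarith, by linarith⟩, ⟨by linarith, by linarith⟩⟩⟩
  have main := intervalIntegral.hasDerivAt_integral_of_dominated_loc_of_deriv_le
    (F := fun x t => ∫ s in (x - wfn r t)..(x + wfn r t), ψ (s, b + t))
    (F' := fun x t => ψ (x + wfn r t, b + t) - ψ (x - wfn r t, b + t))
    (a := -r) (b := r) (x₀ := a) (bound := fun _ => 2 * M) (μ := volume)
    (Metric.ball_mem_nhds a one_pos) ?_ ?_ ?_ ?_ ?_ ?_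
  · exact main.2
  · apply Filter.Eventually.of_forall
    intro x
    exact (((continuous_slice ψ hc r b).comp (Continuous.prodMk_right x)).aestronglyMeasurable)
  · exact ((continuous_slice ψ hc r b).comp (Continuous.prodMk_right a)).intervalIntegrable _ _
  · apply Continuous.aestronglyMeasurable
    have := continuous_wfn r
    fun_prop
  · apply Filter.Eventually.of_forall
    intro t ht x hx
    obtain ⟨m1, m2⟩ := hmem x hx t ht
    calc ‖ψ (x + wfn r t, b + t) - ψ (x - wfn r t, b + t)‖
        ≤ ‖ψ (x + wfn r t, b + t)‖ + ‖ψ (x - wfn r t, b + t)‖ := norm_sub_le _ _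
      _ ≤ M + M := add_le_add (hM _ m1) (hM _ m2)
      _ = 2 * M := by ring
  · exact intervalIntegrable_const
  · apply Filter.Eventually.of_forall
    intro t _ x _
    exact hasDerivAt_inner ψ hc (wfn r t) (b + t) x

lemma integrable_swap (ψ : ℝ × ℝ → ℝ) (hi : Integrable ψ) :
    Integrable (fun q : ℝ × ℝ => ψ (q.2, q.1)) := by
  rw [Measure.volume_eq_prod] at hi ⊢
  exact hi.swap

lemma setIntegral_swap_disk (ψ : ℝ × ℝ → ℝ) (r a b : ℝ) :
    ∫ q in disk (a, b) r, ψ q = ∫ q in disk (b, a) r, ψ (q.2, q.1) := by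
  have hmp : MeasurePreserving (Prod.swap : ℝ × ℝ → ℝ × ℝ) volume volume := by
    rw [Measure.volume_eq_prod]
    exact Measure.measurePreserving_swap
  have := hmp.setIntegral_preimage_emb
    (MeasurableEquiv.prodComm).measurableEmbedding ψ (disk (a, b) r)
  rw [← this]
  have hpre : (Prod.swap : ℝ × ℝ → ℝ × ℝ) ⁻¹' disk (a, b) r = disk (b, a) r := by
    ext q
    simp only [mem_preimage, disk, mem_setOf_eq, Prod.fst_swap, Prod.snd_swap]
    constructor <;> intro <;> linarith
  rw [hpre]
  rfl

noncomputable def Pfun (ψ : ℝ × ℝ → ℝ) (r : ℝ) : ℝ × ℝ → ℝ := fun p =>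
  ∫ t in (-r)..r, (ψ (p.1 + wfn r t, p.2 + t) - ψ (p.1 - wfn r t, p.2 + t))

noncomputable def Qfun (ψ : ℝ × ℝ → ℝ) (r : ℝ) : ℝ × ℝ → ℝ := fun p =>
  ∫ t in (-r)..r, (ψ (p.1 + t, p.2 + wfn r t) - ψ (p.1 + t, p.2 - wfn r t))

lemma continuous_Pfun (ψ : ℝ × ℝ → ℝ) (hc : Continuous ψ) (r : ℝ) :
    Continuous (Pfun ψ r) := by
  apply intervalIntegral.continuous_parametric_intervalIntegral_of_continuous'
  have := continuous_wfn r
  fun_prop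

lemma continuous_Qfun (ψ : ℝ × ℝ → ℝ) (hc : Continuous ψ) (r : ℝ) :
    Continuous (Qfun ψ r) := by
  apply intervalIntegral.continuous_parametric_intervalIntegral_of_continuous'
  have := continuous_wfn r
  fun_prop

lemma hasFDerivAt_G (ψ : ℝ × ℝ → ℝ) (hc : Continuous ψ) (hi : Integrable ψ)
    (r : ℝ) (hr : 0 < r) (p : ℝ × ℝ) :
    HasFDerivAt (fun p : ℝ × ℝ => ∫ q in disk p r, ψ q)
      ((Pfun ψ r p) • (ContinuousLinearMap.fst ℝ ℝ ℝ)
        + (Qfun ψ r p) • (ContinuousLinearMap.snd ℝ ℝ ℝ)) p := by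
  apply hasFDerivAt_of_partials _ (Pfun ψ r) (Qfun ψ r) p
  · intro q
    have := hasDerivAt_G_fst ψ hc hi r hr q.1 q.2
    exact this
  · intro q
    set ψ' : ℝ × ℝ → ℝ := fun q' => ψ (q'.2, q'.1) with hψ'
    have hc' : Continuous ψ' := by fun_prop
    have hi' : Integrable ψ' := integrable_swap ψ hi
    have key := hasDerivAt_G_fst ψ' hc' hi' r hr q.2 q.1
    have hfun : (fun s => ∫ q' in disk (q.1, s) r, ψ q')
        = fun s => ∫ q' in disk (s, q.1) r, ψ' q' := by
      funext s
      exact setIntegral_swap_disk ψ r q.1 s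
    rw [hfun]
    exact key
  · exact (continuous_Pfun ψ hc r).continuousAt
  · exact (continuous_Qfun ψ hc r).continuousAt

lemma cos_part1 (ψ : ℝ × ℝ → ℝ) (hc : Continuous ψ) (r : ℝ) (hr : 0 < r) (a b : ℝ) :
    ∫ θ in (-(π/2))..(π/2), (r * Real.cos θ) * ψ (a + r * Real.cos θ, b + r * Real.sin θ)
      = ∫ t in (-r)..r, ψ (a + wfn r t, b + t) := by
  have hg : Continuous fun t => ψ (a + wfn r t, b + t) := by
    have := continuous_wfn r; fun_prop
  have key := intervalIntegral.integral_comp_smul_deriv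
    (f := fun θ => r * Real.sin θ) (f' := fun θ => r * Real.cos θ)
    (g := fun t => ψ (a + wfn r t, b + t)) (a := -(π/2)) (b := π/2)
    (fun θ _ => (Real.hasDerivAt_sin θ).const_mul r)
    (by fun_prop) hg
  calc ∫ θ in (-(π/2))..(π/2), (r * Real.cos θ) * ψ (a + r * Real.cos θ, b + r * Real.sin θ)
      = ∫ θ in (-(π/2))..(π/2),
          (r * Real.cos θ) • ((fun t => ψ (a + wfn r t, b + t)) ∘ fun θ => r * Real.sin θ) θ := by
        apply intervalIntegral.integral_congr
        intro θ hθ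
        rw [Set.uIcc_of_le (by linarith [Real.pi_pos] : -(π/2) ≤ π/2)] at hθ
        have hcos : 0 ≤ Real.cos θ := Real.cos_nonneg_of_mem_Icc hθ
        have hwfn : wfn r (r * Real.sin θ) = r * Real.cos θ := by
          rw [wfn, show r^2 - (r * Real.sin θ)^2 = (r * Real.cos θ)^2 by
            have := Real.sin_sq_add_cos_sq θ; nlinarith]
          rw [Real.sqrt_sq (by nlinarith)]
        simp only [smul_eq_mul, Function.comp_apply, hwfn]
    _ = ∫ t in (r * Real.sin (-(π/2)))..(r * Real.sin (π/2)), ψ (a + wfn r t, b + t) := key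
    _ = ∫ t in (-r)..r, ψ (a + wfn r t, b + t) := by
        rw [show r * Real.sin (-(π/2)) = -r by
          rw [Real.sin_neg, Real.sin_pi_div_two]; ring,
          show r * Real.sin (π/2) = r by rw [Real.sin_pi_div_two, mul_one]]

lemma cos_part2 (ψ : ℝ × ℝ → ℝ) (hc : Continuous ψ) (r : ℝ) (hr : 0 < r) (a b : ℝ) :
    ∫ θ in (π/2)..(3*π/2), (r * Real.cos θ) * ψ (a + r * Real.cos θ, b + r * Real.sin θ)
      = -∫ t in (-r)..r, ψ (a - wfn r t, b + t) := by
  have hg : Continuous fun t => ψ (a - wfn r t, b + t) := by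
    have := continuous_wfn r; fun_prop
  have key := intervalIntegral.integral_comp_smul_deriv
    (f := fun θ => r * Real.sin θ) (f' := fun θ => r * Real.cos θ)
    (g := fun t => ψ (a - wfn r t, b + t)) (a := π/2) (b := 3*π/2)
    (fun θ _ => (Real.hasDerivAt_sin θ).const_mul r)
    (by fun_prop) hg
  calc ∫ θ in (π/2)..(3*π/2), (r * Real.cos θ) * ψ (a + r * Real.cos θ, b + r * Real.sin θ)
      = ∫ θ in (π/2)..(3*π/2),
          (r * Real.cos θ) • ((fun t => ψ (a - wfn r t, b + t)) ∘ fun θ => r * Real.sin θ) θ := by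
        apply intervalIntegral.integral_congr
        intro θ hθ
        rw [Set.uIcc_of_le (by linarith [Real.pi_pos] : (π/2 : ℝ) ≤ 3*π/2)] at hθ
        have hcos : Real.cos θ ≤ 0 :=
          Real.cos_nonpos_of_pi_div_two_le_of_le hθ.1 (by linarith [hθ.2])
        have hwfn : wfn r (r * Real.sin θ) = -(r * Real.cos θ) := by
          rw [wfn, show r^2 - (r * Real.sin θ)^2 = (-(r * Real.cos θ))^2 by
            have := Real.sin_sq_add_cos_sq θ; nlinarith]
          rw [Real.sqrt_sq (by nlinarith)]
        simp only [smul_eq_mul, Function.comp_apply, hwfn, sub_neg_eq_add]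
    _ = ∫ t in (r * Real.sin (π/2))..(r * Real.sin (3*π/2)), ψ (a - wfn r t, b + t) := key
    _ = -∫ t in (-r)..r, ψ (a - wfn r t, b + t) := by
        rw [show r * Real.sin (π/2) = r by rw [Real.sin_pi_div_two, mul_one],
          show r * Real.sin (3*π/2) = -r by
            rw [show (3*π/2 : ℝ) = π + π/2 by ring, Real.sin_add, Real.sin_pi, Real.cos_pi,
              Real.sin_pi_div_two]; ring]
        exact intervalIntegral.integral_symm _ _

lemma cos_total (ψ : ℝ × ℝ → ℝ) (hc : Continuous ψ) (r : ℝ) (hr : 0 < r) (a b : ℝ) :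
    ∫ θ in (0:ℝ)..(2*π), (r * Real.cos θ) * ψ (a + r * Real.cos θ, b + r * Real.sin θ)
      = Pfun ψ r (a, b) := by
  have hper : Function.Periodic
      (fun θ => (r * Real.cos θ) * ψ (a + r * Real.cos θ, b + r * Real.sin θ)) (2*π) := by
    intro θ
    simp [Real.cos_add_two_pi, Real.sin_add_two_pi]
  have hshift := hper.intervalIntegral_add_eq 0 (-(π/2))
  rw [zero_add, show -(π/2) + 2*π = 3*π/2 by ring] at hshift
  have hcont : Continuous fun θ => (r * Real.cos θ) * ψ (a + r * Real.cos θ, b + r * Real.sin θ) :=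
    by fun_prop
  have hsplit := intervalIntegral.integral_add_adjacent_intervals
    (a := -(π/2)) (b := π/2) (c := 3*π/2) (μ := volume)
    (hcont.intervalIntegrable _ _) (hcont.intervalIntegrable _ _)
  rw [hshift, ← hsplit, cos_part1 ψ hc r hr a b, cos_part2 ψ hc r hr a b]
  rw [Pfun]
  rw [intervalIntegral.integral_sub ((by have := continuous_wfn r; fun_prop :
      Continuous fun t => ψ (a + wfn r t, b + t)).intervalIntegrable _ _)
    ((by have := continuous_wfn r; fun_prop :
      Continuous fun t => ψ (a - wfn r t, b + t)).intervalIntegrable _ _)]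
  ring

lemma sin_part1 (ψ : ℝ × ℝ → ℝ) (hc : Continuous ψ) (r : ℝ) (hr : 0 < r) (a b : ℝ) :
    ∫ θ in (0:ℝ)..π, (r * Real.sin θ) * ψ (a + r * Real.cos θ, b + r * Real.sin θ)
      = ∫ t in (-r)..r, ψ (a + t, b + wfn r t) := by
  have hg : Continuous fun t => ψ (a + t, b + wfn r t) := by
    have := continuous_wfn r; fun_prop
  have key := intervalIntegral.integral_comp_smul_deriv
    (f := fun θ => r * Real.cos θ) (f' := fun θ => r * -Real.sin θ)
    (g := fun t => ψ (a + t, b + wfn r t)) (a := (0:ℝ)) (b := π)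
    (fun θ _ => (Real.hasDerivAt_cos θ).const_mul r)
    (by fun_prop) hg
  calc ∫ θ in (0:ℝ)..π, (r * Real.sin θ) * ψ (a + r * Real.cos θ, b + r * Real.sin θ)
      = -∫ θ in (0:ℝ)..π,
          (r * -Real.sin θ) • ((fun t => ψ (a + t, b + wfn r t)) ∘ fun θ => r * Real.cos θ) θ := by
        rw [← intervalIntegral.integral_neg]
        apply intervalIntegral.integral_congr
        intro θ hθ
        rw [Set.uIcc_of_le Real.pi_pos.le] at hθ
        have hsin : 0 ≤ Real.sin θ := Real.sin_nonneg_of_nonneg_of_le_pi hθ.1 hθ.2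
        have hwfn : wfn r (r * Real.cos θ) = r * Real.sin θ := by
          rw [wfn, show r^2 - (r * Real.cos θ)^2 = (r * Real.sin θ)^2 by
            have := Real.sin_sq_add_cos_sq θ; nlinarith]
          rw [Real.sqrt_sq (by nlinarith)]
        simp only [smul_eq_mul, Function.comp_apply, hwfn]
        ring
    _ = -∫ t in (r * Real.cos 0)..(r * Real.cos π), ψ (a + t, b + wfn r t) := by rw [key]
    _ = ∫ t in (-r)..r, ψ (a + t, b + wfn r t) := by
        rw [show r * Real.cos 0 = r by rw [Real.cos_zero, mul_one],
          show r * Real.cos π = -r by rw [Real.cos_pi]; ring,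
          intervalIntegral.integral_symm, neg_neg]

lemma sin_part2 (ψ : ℝ × ℝ → ℝ) (hc : Continuous ψ) (r : ℝ) (hr : 0 < r) (a b : ℝ) :
    ∫ θ in π..(2*π), (r * Real.sin θ) * ψ (a + r * Real.cos θ, b + r * Real.sin θ)
      = -∫ t in (-r)..r, ψ (a + t, b - wfn r t) := by
  have hg : Continuous fun t => ψ (a + t, b - wfn r t) := by
    have := continuous_wfn r; fun_prop
  have key := intervalIntegral.integral_comp_smul_deriv
    (f := fun θ => r * Real.cos θ) (f' := fun θ => r * -Real.sin θ)
    (g := fun t => ψ (a + t, b - wfn r t)) (a := π) (b := 2*π)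
    (fun θ _ => (Real.hasDerivAt_cos θ).const_mul r)
    (by fun_prop) hg
  calc ∫ θ in π..(2*π), (r * Real.sin θ) * ψ (a + r * Real.cos θ, b + r * Real.sin θ)
      = -∫ θ in π..(2*π),
          (r * -Real.sin θ) • ((fun t => ψ (a + t, b - wfn r t)) ∘ fun θ => r * Real.cos θ) θ := by
        rw [← intervalIntegral.integral_neg]
        apply intervalIntegral.integral_congr
        intro θ hθ
        rw [Set.uIcc_of_le (by linarith [Real.pi_pos] : π ≤ 2*π)] at hθ
        have hsin : Real.sin θ ≤ 0 := by
          have h1 : 0 ≤ Real.sin (θ - π) :=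
            Real.sin_nonneg_of_nonneg_of_le_pi (by linarith [hθ.1]) (by linarith [hθ.2])
          rw [Real.sin_sub_pi] at h1
          linarith
        have hwfn : wfn r (r * Real.cos θ) = -(r * Real.sin θ) := by
          rw [wfn, show r^2 - (r * Real.cos θ)^2 = (-(r * Real.sin θ))^2 by
            have := Real.sin_sq_add_cos_sq θ; nlinarith]
          rw [Real.sqrt_sq (by nlinarith)]
        simp only [smul_eq_mul, Function.comp_apply, hwfn, sub_neg_eq_add]
        ring
    _ = -∫ t in (r * Real.cos π)..(r * Real.cos (2*π)), ψ (a + t, b - wfn r t) := by rw [key]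
    _ = -∫ t in (-r)..r, ψ (a + t, b - wfn r t) := by
        rw [show r * Real.cos π = -r by rw [Real.cos_pi]; ring,
          show r * Real.cos (2*π) = r by rw [Real.cos_two_pi, mul_one]]

lemma sin_total (ψ : ℝ × ℝ → ℝ) (hc : Continuous ψ) (r : ℝ) (hr : 0 < r) (a b : ℝ) :
    ∫ θ in (0:ℝ)..(2*π), (r * Real.sin θ) * ψ (a + r * Real.cos θ, b + r * Real.sin θ)
      = Qfun ψ r (a, b) := by
  have hcont : Continuous fun θ => (r * Real.sin θ) * ψ (a + r * Real.cos θ, b + r * Real.sin θ) :=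
    by fun_prop
  have hsplit := intervalIntegral.integral_add_adjacent_intervals
    (a := (0:ℝ)) (b := π) (c := 2*π) (μ := volume)
    (hcont.intervalIntegrable _ _) (hcont.intervalIntegrable _ _)
  rw [← hsplit, sin_part1 ψ hc r hr a b, sin_part2 ψ hc r hr a b]
  rw [Qfun]
  rw [intervalIntegral.integral_sub ((by have := continuous_wfn r; fun_prop :
      Continuous fun t => ψ (a + t, b + wfn r t)).intervalIntegrable _ _)
    ((by have := continuous_wfn r; fun_prop :
      Continuous fun t => ψ (a + t, b - wfn r t)).intervalIntegrable _ _)]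
  ring

section euclid

local notation "E2" => EuclideanSpace ℝ (Fin 2)

noncomputable def cinv : ℝ × ℝ → EuclideanSpace ℝ (Fin 2) :=
  fun p => (WithLp.equiv 2 (Fin 2 → ℝ)).symm ![p.1, p.2]

lemma cinv_apply_fst (p : ℝ × ℝ) : cinv p 0 = p.1 := by
  simp [cinv, WithLp.equiv_symm_apply]

lemma cinv_apply_snd (p : ℝ × ℝ) : cinv p 1 = p.2 := by
  simp [cinv, WithLp.equiv_symm_apply]

lemma cinv_coords (q : E2) : cinv (q 0, q 1) = q := by
  ext i
  fin_cases i
  · exact cinv_apply_fst _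
  · exact cinv_apply_snd _

lemma continuous_cinv : Continuous cinv := by
  have h : Continuous fun p : ℝ × ℝ => (![p.1, p.2] : Fin 2 → ℝ) := by
    apply continuous_pi
    intro i
    fin_cases i
    · simpa using continuous_fst
    · simpa using continuous_snd
  exact (PiLp.continuousLinearEquiv 2 ℝ (fun _ : Fin 2 => ℝ)).symm.continuous.comp h

noncomputable def mE : EuclideanSpace ℝ (Fin 2) ≃ᵐ ℝ × ℝ :=
  (MeasurableEquiv.toLp 2 (Fin 2 → ℝ)).symm.trans MeasurableEquiv.finTwoArrow

lemma mE_apply (q : E2) : mE q = (q 0, q 1) := rfl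

lemma measurePreserving_mE : MeasurePreserving mE volume volume :=
  (volume_preserving_finTwoArrow ℝ).comp
    (EuclideanSpace.volume_preserving_symm_measurableEquiv_toLp (Fin 2))

lemma preimage_disk (x : E2) (r : ℝ) (hr : 0 < r) :
    mE ⁻¹' disk (x 0, x 1) r = ball x r := by
  ext q
  simp only [mem_preimage, mE_apply, disk, mem_setOf_eq, mem_ball]
  rw [EuclideanSpace.dist_eq, Fin.sum_univ_two, Real.sqrt_lt' hr]
  simp [Real.dist_eq, sq_abs]

end euclid

theorem gradient_of_neg_covered_mass
    (φ : EuclideanSpace ℝ (Fin 2) → ℝ) (hφ : Continuous φ)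
    (hint : Integrable φ) (r : ℝ) (hr : 0 < r) (x : EuclideanSpace ℝ (Fin 2)) :
    let u : ℝ → EuclideanSpace ℝ (Fin 2) :=
      fun θ => (WithLp.equiv 2 (Fin 2 → ℝ)).symm ![Real.cos θ, Real.sin θ]
    HasGradientAt (fun x => -∫ q in ball x r, φ q)
      (-∫ θ in (0:ℝ)..(2 * π), (r * φ (x + r • u θ)) • u θ) x := by
  intro u
  set a : ℝ := x 0 with ha
  set b : ℝ := x 1 with hb
  set ψ : ℝ × ℝ → ℝ := fun p => φ (cinv p) with hψ
  have hψc : Continuous ψ := hφ.comp continuous_cinv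
  have hcomp : ψ ∘ mE = φ := by
    funext q
    simp only [Function.comp_apply, mE_apply, hψ]
    rw [cinv_coords]
  have hψi : Integrable ψ := by
    rw [← measurePreserving_mE.integrable_comp_emb mE.measurableEmbedding]
    rw [hcomp]; exact hint
  have hset : ∀ y : EuclideanSpace ℝ (Fin 2),
      ∫ q in ball y r, φ q = ∫ p in disk (y 0, y 1) r, ψ p := by
    intro y
    calc ∫ q in ball y r, φ q = ∫ q in ball y r, (ψ ∘ mE) q := by rw [hcomp]
      _ = ∫ p in disk (y 0, y 1) r, ψ p := by
          rw [← preimage_disk y r hr]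
          exact measurePreserving_mE.setIntegral_preimage_emb mE.measurableEmbedding ψ _
  set L₀ : ℝ × ℝ →L[ℝ] ℝ := (Pfun ψ r (a, b)) • (ContinuousLinearMap.fst ℝ ℝ ℝ)
    + (Qfun ψ r (a, b)) • (ContinuousLinearMap.snd ℝ ℝ ℝ) with hL₀
  have hG := hasFDerivAt_G ψ hψc hψi r hr (a, b)
  set cmap : EuclideanSpace ℝ (Fin 2) →L[ℝ] ℝ × ℝ :=
    (EuclideanSpace.proj (0 : Fin 2)).prod (EuclideanSpace.proj (1 : Fin 2)) with hcmap
  have hcmap_apply : ∀ y : EuclideanSpace ℝ (Fin 2), cmap y = (y 0, y 1) := fun y => rfl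
  have hcomp2 : HasFDerivAt (fun y : EuclideanSpace ℝ (Fin 2) => ∫ q in disk (cmap y) r, ψ q)
      (L₀.comp cmap) x := by
    have hx : cmap x = (a, b) := hcmap_apply x
    exact HasFDerivAt.comp x (hx ▸ hG) cmap.hasFDerivAt
  have hFneg : HasFDerivAt (fun y : EuclideanSpace ℝ (Fin 2) => -∫ q in ball y r, φ q)
      (-(L₀.comp cmap)) x := by
    apply hcomp2.neg.congr_of_eventuallyEq
    apply Filter.Eventually.of_forall
    intro y
    show -∫ q in ball y r, φ q = -∫ q in disk (cmap y) r, ψ q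
    rw [hset y, hcmap_apply y]
  rw [hasGradientAt_iff_hasFDerivAt]
  -- component facts
  have hu_eq : u = fun θ => cinv (Real.cos θ, Real.sin θ) := rfl
  have hu : Continuous u := by
    rw [hu_eq]; exact continuous_cinv.comp (continuous_cos.prodMk continuous_sin)
  have hu0 : ∀ θ, u θ 0 = Real.cos θ := by
    intro θ; rw [hu_eq]; exact cinv_apply_fst (Real.cos θ, Real.sin θ)
  have hu1 : ∀ θ, u θ 1 = Real.sin θ := by
    intro θ; rw [hu_eq]; exact cinv_apply_snd (Real.cos θ, Real.sin θ)
  have hφu : ∀ θ : ℝ, φ (x + r • u θ) = ψ (a + r * Real.cos θ, b + r * Real.sin θ) := by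
    intro θ
    have h0 : (x + r • u θ) 0 = a + r * Real.cos θ := by
      simp [PiLp.add_apply, PiLp.smul_apply, smul_eq_mul, hu0, ha]
    have h1 : (x + r • u θ) 1 = b + r * Real.sin θ := by
      simp [PiLp.add_apply, PiLp.smul_apply, smul_eq_mul, hu1, hb]
    rw [hψ]
    congr 1
    rw [show ((a + r * Real.cos θ, b + r * Real.sin θ) : ℝ × ℝ)
      = ((x + r • u θ) 0, (x + r • u θ) 1) by rw [h0, h1], cinv_coords]
  have hcont_integrand : Continuous fun θ => (r * φ (x + r • u θ)) • u θ := by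
    refine Continuous.smul (M := ℝ) (X := EuclideanSpace ℝ (Fin 2)) ?_ ?_
    · exact continuous_const.mul (hφ.comp (continuous_const.add (hu.const_smul r)))
    · exact hu
  have hInt : IntervalIntegrable (fun θ => (r * φ (x + r • u θ)) • u θ) volume 0 (2*π) :=
    hcont_integrand.intervalIntegrable _ _
  have hproj : ∀ i : Fin 2, (∫ θ in (0:ℝ)..(2*π), (r * φ (x + r • u θ)) • u θ) i
      = ∫ θ in (0:ℝ)..(2*π), (r * φ (x + r • u θ)) * (u θ i) := by
    intro i
    have := ((EuclideanSpace.proj i : EuclideanSpace ℝ (Fin 2) →L[ℝ] ℝ)).intervalIntegral_comp_comm hInt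
    have h2 : ∀ w : EuclideanSpace ℝ (Fin 2), EuclideanSpace.proj i w = w i := fun _ => rfl
    calc (∫ θ in (0:ℝ)..(2*π), (r * φ (x + r • u θ)) • u θ) i
        = EuclideanSpace.proj i (∫ θ in (0:ℝ)..(2*π), (r * φ (x + r • u θ)) • u θ) :=
          (h2 _).symm
      _ = ∫ θ in (0:ℝ)..(2*π), EuclideanSpace.proj i ((r * φ (x + r • u θ)) • u θ) := this.symm
      _ = ∫ θ in (0:ℝ)..(2*π), (r * φ (x + r • u θ)) * (u θ i) := by congr 1
  have hcomp0 : (∫ θ in (0:ℝ)..(2*π), (r * φ (x + r • u θ)) • u θ) 0 = Pfun ψ r (a, b) := by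
    rw [hproj 0, ← cos_total ψ hψc r hr a b]
    apply intervalIntegral.integral_congr
    intro θ _
    simp only [hu0 θ, hφu θ]
    ring
  have hcomp1 : (∫ θ in (0:ℝ)..(2*π), (r * φ (x + r • u θ)) • u θ) 1 = Qfun ψ r (a, b) := by
    rw [hproj 1, ← sin_total ψ hψc r hr a b]
    apply intervalIntegral.integral_congr
    intro θ _
    simp only [hu1 θ, hφu θ]
    ring
  have key : (InnerProductSpace.toDual ℝ (EuclideanSpace ℝ (Fin 2)))
      (-∫ θ in (0:ℝ)..(2*π), (r * φ (x + r • u θ)) • u θ) = -(L₀.comp cmap) := by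
    apply ContinuousLinearMap.ext
    intro v
    rw [InnerProductSpace.toDual_apply_apply]
    rw [PiLp.inner_apply]
    simp only [RCLike.inner_apply, starRingEnd_apply, star_trivial, Fin.sum_univ_two]
    have hneg0 : (-∫ θ in (0:ℝ)..(2*π), (r * φ (x + r • u θ)) • u θ) 0
        = -(Pfun ψ r (a, b)) := by
      rw [show (-∫ θ in (0:ℝ)..(2*π), (r * φ (x + r • u θ)) • u θ) 0
        = -((∫ θ in (0:ℝ)..(2*π), (r * φ (x + r • u θ)) • u θ) 0) from rfl, hcomp0]
    have hneg1 : (-∫ θ in (0:ℝ)..(2*π), (r * φ (x + r • u θ)) • u θ) 1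
        = -(Qfun ψ r (a, b)) := by
      rw [show (-∫ θ in (0:ℝ)..(2*π), (r * φ (x + r • u θ)) • u θ) 1
        = -((∫ θ in (0:ℝ)..(2*π), (r * φ (x + r • u θ)) • u θ) 1) from rfl, hcomp1]
    rw [hneg0, hneg1]
    rw [ContinuousLinearMap.neg_apply, ContinuousLinearMap.comp_apply, hcmap_apply v, hL₀]
    simp only [ContinuousLinearMap.add_apply, ContinuousLinearMap.coe_smul', Pi.smul_apply,
      ContinuousLinearMap.coe_fst', ContinuousLinearMap.coe_snd', smul_eq_mul]
    ring
  rw [key]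
  exact hFneg
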